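/- Let E be a symmetrically Δ-normed space of τ-measurable operators affiliated with a semifinite von Neumann algebra (M, τ), with carrier projection equal to 1. Then every projection p ∈ M with τ(p) < ∞ belongs to E, and consequently every operator x ∈ M with τ(s(x)) < ∞ (finite-trace support) belongs to E. -/

import Mathlib

open Matrix ComplexOrder

/-- The singular values of a matrix, sorted in increasing order. -/
noncomputable def svSorted {n : ℕ} (A : Matrix (Fin n) (Fin n) ℂ) : Fin n → ℝ :=
  fun i => Real.sqrt ((Matrix.posSemidef_conjTranspose_mul_self A).1.eigenvalues
    (Tuple.sort (Matrix.posSemidef_conjTranspose_mul_self A).1.eigenvalues i))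

/-- The eigenvectors of a Hermitian matrix have unit norm, as a dot product. -/
lemma stmt15_unitDot {n : ℕ} {A : Matrix (Fin n) (Fin n) ℂ} (hA : A.IsHermitian) (i : Fin n) :
    star ⇑(hA.eigenvectorBasis i) ⬝ᵥ ⇑(hA.eigenvectorBasis i) = 1 := by
  have h1 : ‖hA.eigenvectorBasis i‖ = 1 := hA.eigenvectorBasis.orthonormal.1 i
  have := inner_self_eq_norm_sq_to_K (𝕜 := ℂ) (hA.eigenvectorBasis i)
  rw [EuclideanSpace.inner_eq_star_dotProduct] at this
  rw [dotProduct_comm]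
  simpa [h1] using this

/-- If `A - m•1` is positive semidefinite, all eigenvalues of `A` are at least `m`. -/
lemma stmt15_L1 {n : ℕ} {A : Matrix (Fin n) (Fin n) ℂ} (hA : A.IsHermitian) (m : ℝ)
    (h : (A - (m : ℂ) • 1).PosSemidef) (i : Fin n) : m ≤ hA.eigenvalues i := by
  have hv := h.dotProduct_mulVec_nonneg ⇑(hA.eigenvectorBasis i)
  rw [sub_mulVec, dotProduct_sub, hA.mulVec_eigenvectorBasis, smul_mulVec, one_mulVec,
    dotProduct_smul, dotProduct_smul, stmt15_unitDot hA i] at hv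
  have : (0:ℂ) ≤ ((hA.eigenvalues i - m : ℝ) : ℂ) := by
    convert hv using 1
    push_cast
    simp [Complex.real_smul]
  rw [Complex.zero_le_real] at this
  linarith

/-- If all eigenvalues of `A` are at least `m`, then `A - m•1` is positive semidefinite. -/
lemma stmt15_L2 {n : ℕ} {A : Matrix (Fin n) (Fin n) ℂ} (hA : A.IsHermitian) (m : ℝ)
    (h : ∀ i, m ≤ hA.eigenvalues i) : (A - (m : ℂ) • 1).PosSemidef := by
  have key : A - (m : ℂ) • 1 =
      (hA.eigenvectorUnitary : Matrix (Fin n) (Fin n) ℂ) *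
        diagonal (fun i => ((hA.eigenvalues i - m : ℝ) : ℂ)) *
        (hA.eigenvectorUnitary : Matrix (Fin n) (Fin n) ℂ)ᴴ := by
    conv_lhs => rw [hA.spectral_theorem, Unitary.conjStarAlgAut_apply]
    rw [← Matrix.star_eq_conjTranspose]
    have hU : (hA.eigenvectorUnitary : Matrix (Fin n) (Fin n) ℂ) *
        star (hA.eigenvectorUnitary : Matrix (Fin n) (Fin n) ℂ) = 1 :=
      (Matrix.mem_unitaryGroup_iff).mp (hA.eigenvectorUnitary).2
    have : (m : ℂ) • (1 : Matrix (Fin n) (Fin n) ℂ) =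
        (hA.eigenvectorUnitary : Matrix (Fin n) (Fin n) ℂ) * ((m : ℂ) • 1) *
        star (hA.eigenvectorUnitary : Matrix (Fin n) (Fin n) ℂ) := by
      rw [Matrix.mul_smul, Matrix.mul_one, Matrix.smul_mul, hU]
    rw [this, ← Matrix.sub_mul, ← Matrix.mul_sub]
    congr 1
    congr 1
    rw [← Matrix.diagonal_one, ← Matrix.diagonal_smul, diagonal_sub]
    congr 1
    funext i
    simp [Complex.real_smul, mul_comm]
  rw [key]
  exact (posSemidef_diagonal_iff.mpr (fun i => by
    rw [Complex.zero_le_real]; linarith [h i])).mul_mul_conjTranspose_same _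

/-- A nonnegative real multiple of a positive semidefinite matrix is positive semidefinite. -/
lemma stmt15_L3 {n : ℕ} {P : Matrix (Fin n) (Fin n) ℂ} (hP : P.PosSemidef) {r : ℝ} (hr : 0 ≤ r) :
    ((r : ℂ) • P).PosSemidef := by
  refine posSemidef_iff_dotProduct_mulVec.mpr ⟨?_, ?_⟩
  · unfold Matrix.IsHermitian
    rw [conjTranspose_smul, hP.1]
    congr 1
    simp
  · intro v
    rw [smul_mulVec, dotProduct_smul]
    exact smul_nonneg (by rwa [Complex.zero_le_real]) (hP.dotProduct_mulVec_nonneg v)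

/-- `E` contains a matrix acting injectively, by minimizing kernel dimension. -/
lemma stmt15_exists_injective {n : ℕ} (E : Submodule ℂ (Matrix (Fin n) (Fin n) ℂ))
    (hcarrier : ∀ v : Fin n → ℂ, v ≠ 0 → ∃ q : Matrix (Fin n) (Fin n) ℂ,
      q ∈ E ∧ q * q = q ∧ qᴴ = q ∧ q.mulVec v ≠ 0) :
    ∃ x : Matrix (Fin n) (Fin n) ℂ, x ∈ E ∧ ∀ v : Fin n → ℂ, v ≠ 0 → x.mulVec v ≠ 0 := by
  classical
  set S : Set ℕ := {k | ∃ x : Matrix (Fin n) (Fin n) ℂ, x ∈ E ∧ x.PosSemidef ∧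
    Module.finrank ℂ (LinearMap.ker x.mulVecLin) = k} with hS
  have hne : S.Nonempty := ⟨_, 0, E.zero_mem, Matrix.PosSemidef.zero, rfl⟩
  obtain ⟨x, hxE, hxP, hxk⟩ := Nat.sInf_mem hne
  refine ⟨x, hxE, ?_⟩
  by_contra hcon
  push_neg at hcon
  obtain ⟨v, hv0, hxv⟩ := hcon
  obtain ⟨q, hqE, hq2, hqH, hqv⟩ := hcarrier v hv0
  have hqP : q.PosSemidef := by
    have : q = qᴴ * q := by rw [hqH, hq2]
    rw [this]; exact posSemidef_conjTranspose_mul_self q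
  have hsum : (x + q).PosSemidef := hxP.add hqP
  have hker : LinearMap.ker (x + q).mulVecLin < LinearMap.ker x.mulVecLin := by
    rw [lt_iff_le_and_ne]
    constructor
    · intro w hw
      rw [LinearMap.mem_ker, mulVecLin_apply] at hw ⊢
      have h0 : star w ⬝ᵥ (x + q) *ᵥ w = 0 := by rw [hw, dotProduct_zero]
      rw [add_mulVec, dotProduct_add] at h0
      have hx0 : star w ⬝ᵥ x *ᵥ w = 0 :=
        ((add_eq_zero_iff_of_nonneg (hxP.dotProduct_mulVec_nonneg w) (hqP.dotProduct_mulVec_nonneg w)).mp h0).1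
      exact (hxP.dotProduct_mulVec_zero_iff w).mp hx0
    · intro heq
      have hvmem : v ∈ LinearMap.ker x.mulVecLin := by
        rw [LinearMap.mem_ker, mulVecLin_apply]; exact hxv
      rw [← heq, LinearMap.mem_ker, mulVecLin_apply, add_mulVec, hxv, zero_add] at hvmem
      exact hqv hvmem
  have hlt : Module.finrank ℂ (LinearMap.ker (x + q).mulVecLin) <
      Module.finrank ℂ (LinearMap.ker x.mulVecLin) :=
    Submodule.finrank_lt_finrank_of_lt hker
  rw [hxk] at hlt
  have hmem : Module.finrank ℂ (LinearMap.ker (x + q).mulVecLin) ∈ S :=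
    ⟨x + q, E.add_mem hxE hqE, hsum, rfl⟩
  exact absurd (Nat.sInf_le hmem) (Nat.not_le.mpr hlt)

/-- If `x` acts injectively, then `xᴴ * x` is positive definite. -/
lemma stmt15_posDef {n : ℕ} {x : Matrix (Fin n) (Fin n) ℂ}
    (hinj : ∀ v : Fin n → ℂ, v ≠ 0 → x.mulVec v ≠ 0) : (xᴴ * x).PosDef := by
  refine posDef_iff_dotProduct_mulVec.mpr ⟨(posSemidef_conjTranspose_mul_self x).1, fun v hv => ?_⟩
  have h1 : star v ⬝ᵥ (xᴴ * x) *ᵥ v = star (x *ᵥ v) ⬝ᵥ (x *ᵥ v) := by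
    rw [← mulVec_mulVec, dotProduct_mulVec, vecMul_conjTranspose, star_star]
  rw [h1]
  exact dotProduct_star_self_pos_iff.mpr (hinj v hv)

/-- Matrix version of: in a symmetrically Δ-normed space whose carrier projection
is `1`, every finite-trace projection (here: every projection) belongs to `E`,
and consequently every operator of finite-trace support (here: every matrix)
belongs to `E`. -/
theorem stmt_15 {n : ℕ} (E : Submodule ℂ (Matrix (Fin n) (Fin n) ℂ))
    (nrm : Matrix (Fin n) (Fin n) ℂ → ℝ) (CΔ : ℝ) (hC : 1 ≤ CΔ)
    (hnn : ∀ x, 0 ≤ nrm x) (hzero : ∀ x, nrm x = 0 ↔ x = 0)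
    (hhom : ∀ (α : ℂ) x, ‖α‖ ≤ 1 → nrm (α • x) ≤ nrm x)
    (hscal : ∀ x, Filter.Tendsto (fun α : ℂ => nrm (α • x)) (nhds 0) (nhds 0))
    (htri : ∀ x y, nrm (x + y) ≤ CΔ * (nrm x + nrm y))
    (hsym : ∀ x y, x ∈ E → (∀ i, svSorted y i ≤ svSorted x i) →
      y ∈ E ∧ nrm y ≤ nrm x)
    (hcarrier : ∀ v : Fin n → ℂ, v ≠ 0 → ∃ q : Matrix (Fin n) (Fin n) ℂ,
      q ∈ E ∧ q * q = q ∧ qᴴ = q ∧ q.mulVec v ≠ 0) :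
    (∀ q : Matrix (Fin n) (Fin n) ℂ, q * q = q → qᴴ = q → q ∈ E) ∧
    (∀ x : Matrix (Fin n) (Fin n) ℂ, x ∈ E) := by
  rcases Nat.eq_zero_or_pos n with hn | hn
  · subst hn
    have hall : ∀ x : Matrix (Fin 0) (Fin 0) ℂ, x ∈ E := fun x => by
      have : x = 0 := Subsingleton.elim x 0
      rw [this]; exact E.zero_mem
    exact ⟨fun q _ _ => hall q, hall⟩
  · haveI : Nonempty (Fin n) := ⟨⟨0, hn⟩⟩
    obtain ⟨x, hxE, hinj⟩ := stmt15_exists_injective E hcarrier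
    have hB : (xᴴ * x).PosDef := stmt15_posDef hinj
    have hBH : (xᴴ * x).IsHermitian := (posSemidef_conjTranspose_mul_self x).1
    set m : ℝ := Finset.univ.inf' Finset.univ_nonempty hBH.eigenvalues with hm
    have hm0 : 0 < m := by
      rw [hm, Finset.lt_inf'_iff]
      intro i _
      exact hB.eigenvalues_pos i
    have hmle : ∀ i, m ≤ hBH.eigenvalues i := fun i => Finset.inf'_le _ (Finset.mem_univ i)
    have hall : ∀ y : Matrix (Fin n) (Fin n) ℂ, y ∈ E := by
      intro y
      have hYH : (yᴴ * y).IsHermitian := (posSemidef_conjTranspose_mul_self y).1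
      set T : ℝ := ∑ j, hYH.eigenvalues j with hT
      have hTnn : ∀ j, 0 ≤ hYH.eigenvalues j := fun j =>
        (posSemidef_conjTranspose_mul_self y).eigenvalues_nonneg j
      have hTle : ∀ j, hYH.eigenvalues j ≤ T := fun j =>
        Finset.single_le_sum (fun i _ => hTnn i) (Finset.mem_univ j)
      have hT0 : 0 ≤ T := Finset.sum_nonneg fun i _ => hTnn i
      set t : ℝ := Real.sqrt (T / m) with ht
      have ht2 : t ^ 2 * m = T := by
        rw [ht, Real.sq_sqrt (div_nonneg hT0 hm0.le)]
        field_simp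
      set X : Matrix (Fin n) (Fin n) ℂ := ((t : ℝ) : ℂ) • x with hX
      have hXE : X ∈ E := E.smul_mem _ hxE
      have hXX : Xᴴ * X = ((t ^ 2 : ℝ) : ℂ) • (xᴴ * x) := by
        rw [hX, conjTranspose_smul, Matrix.smul_mul, Matrix.mul_smul, smul_smul]
        congr 1
        rw [Complex.star_def, Complex.conj_ofReal]
        push_cast
        ring
      have hpsd : (Xᴴ * X - (T : ℂ) • 1).PosSemidef := by
        have h2 : Xᴴ * X - (T : ℂ) • 1 = ((t ^ 2 : ℝ) : ℂ) • ((xᴴ * x) - (m : ℂ) • 1) := by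
          rw [hXX, smul_sub, smul_smul]
          congr 2
          rw [← ht2]
          push_cast
          ring
        rw [h2]
        exact stmt15_L3 (stmt15_L2 hBH m hmle) (sq_nonneg t)
      have key : ∀ i, svSorted y i ≤ svSorted X i := by
        intro i
        unfold svSorted
        exact Real.sqrt_le_sqrt ((hTle _).trans
          (stmt15_L1 (Matrix.posSemidef_conjTranspose_mul_self X).1 T hpsd _))
      exact (hsym X y hXE key).1
    exact ⟨fun q _ _ => hall q, hall⟩
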